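/- arXiv:2009.07204 — 6 statements merged into one kernel-verified Lean document; each statement's English description precedes it below -/
import Mathlib

section
/- If F : 𝔽₂ⁿ → 𝔽₂ⁿ is an APN function (n ≥ 1), then the cardinality of the image of F is at least ⌈2^{2n} / (3·2ⁿ − 2)⌉. -/
open Finset

/-- `F` is almost perfect nonlinear (APN). -/
def IsAPN {n : ℕ} (F : (Fin n → ZMod 2) → (Fin n → ZMod 2)) : Prop :=
  ∀ a : Fin n → ZMod 2, a ≠ 0 → ∀ b : Fin n → ZMod 2,
    (Finset.univ.filter fun x => F x + F (x + a) = b).card ≤ 2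

private lemma apn_add_eq_zero_iff {n : ℕ} (u v : Fin n → ZMod 2) : u + v = 0 ↔ u = v := by
  constructor
  · intro h
    funext i
    exact (by decide : ∀ a b : ZMod 2, a + b = 0 → a = b) (u i) (v i) (congrFun h i)
  · rintro rfl
    funext i
    exact (by decide : ∀ a : ZMod 2, a + a = 0) (u i)

/-- an APN function on `𝔽₂ⁿ` (`n ≥ 1`) has image of size at least
`⌈2^(2n) / (3·2ⁿ − 2)⌉`. -/
theorem apn_image_lower_bound {n : ℕ} (hn : 1 ≤ n)
    (F : (Fin n → ZMod 2) → (Fin n → ZMod 2)) (hF : IsAPN F) :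
    (2 ^ (2 * n) + (3 * 2 ^ n - 2) - 1) / (3 * 2 ^ n - 2) ≤ Nat.card (Set.range F) := by
  classical
  set N : ℕ := 2 ^ n with hN
  have hcardV : Fintype.card (Fin n → ZMod 2) = N := by
    simp [hN, ZMod.card]
  set T : Finset (Fin n → ZMod 2) := Finset.univ.image F with hT
  set m : (Fin n → ZMod 2) → ℕ := fun b => (Finset.univ.filter fun x => F x = b).card with hm
  have hrange : Nat.card (Set.range F) = T.card := by
    rw [Nat.card_eq_fintype_card, ← Set.toFinset_card, Set.toFinset_range]
  have hsum : ∑ b ∈ T, m b = N := by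
    have h := Finset.card_eq_sum_card_image F (Finset.univ : Finset (Fin n → ZMod 2))
    rw [Finset.card_univ, hcardV] at h
    exact h.symm
  set S : ℕ := ∑ x : Fin n → ZMod 2, ∑ y : Fin n → ZMod 2, if F x = F y then 1 else 0 with hS
  have hfact1 : ∑ b ∈ T, m b ^ 2 = S := by
    have h1 : S = ∑ x : Fin n → ZMod 2, m (F x) := by
      refine Finset.sum_congr rfl fun x _ => ?_
      show _ = (Finset.univ.filter fun y => F y = F x).card
      rw [Finset.card_filter]
      exact Finset.sum_congr rfl fun y _ => by simp [eq_comm]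
    rw [h1, ← Finset.sum_fiberwise_of_maps_to
      (fun x _ => Finset.mem_image_of_mem F (Finset.mem_univ x) : ∀ x ∈ Finset.univ, F x ∈ T)
      (fun x => m (F x))]
    refine Finset.sum_congr rfl fun b hb => ?_
    have h2 : ∀ x ∈ Finset.univ.filter fun x => F x = b, m (F x) = m b := by
      intro x hx
      rw [(Finset.mem_filter.mp hx).2]
    rw [Finset.sum_congr rfl h2, Finset.sum_const, smul_eq_mul, sq]
  have hkey : ∀ a : Fin n → ZMod 2, a ≠ 0 →
      (Finset.univ.filter fun x => F x = F (x + a)).card ≤ 2 := by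
    intro a ha
    have h := hF a ha 0
    convert h using 2
    ext x
    simp [apn_add_eq_zero_iff]
  have hfact2 : S ≤ N + 2 * (N - 1) := by
    have hstep : S = ∑ x : Fin n → ZMod 2, ∑ a : Fin n → ZMod 2,
        if F x = F (x + a) then 1 else 0 := by
      refine Finset.sum_congr rfl fun x _ => ?_
      exact (Fintype.sum_equiv (Equiv.addLeft x) _ _ (fun a => by simp [add_comm]; congr)).symm
    rw [hstep]
    have hsplit : ∀ x : Fin n → ZMod 2, (∑ a : Fin n → ZMod 2, if F x = F (x + a) then 1 else 0)
        = 1 + ∑ a ∈ Finset.univ.erase (0 : Fin n → ZMod 2), (if F x = F (x + a) then 1 else 0) := by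
      intro x
      rw [← Finset.add_sum_erase _ _ (Finset.mem_univ (0 : Fin n → ZMod 2))]
      simp
    simp_rw [hsplit]
    rw [Finset.sum_add_distrib, Finset.sum_const, Finset.card_univ, hcardV, smul_eq_mul, mul_one]
    gcongr
    rw [Finset.sum_comm]
    calc ∑ a ∈ Finset.univ.erase (0 : Fin n → ZMod 2), ∑ x : Fin n → ZMod 2,
          (if F x = F (x + a) then 1 else 0)
        ≤ ∑ _a ∈ Finset.univ.erase (0 : Fin n → ZMod 2), 2 := by
          refine Finset.sum_le_sum fun a ha => ?_
          rw [← Finset.card_filter]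
          exact hkey a (Finset.ne_of_mem_erase ha)
      _ = 2 * (N - 1) := by
          rw [Finset.sum_const, smul_eq_mul, Finset.card_erase_of_mem (Finset.mem_univ _),
            Finset.card_univ, hcardV, mul_comm]
  have hN2 : 2 ≤ N := by
    calc 2 = 2 ^ 1 := rfl
    _ ≤ 2 ^ n := Nat.pow_le_pow_right (by norm_num) hn
  have hCS : N ^ 2 ≤ T.card * (3 * N - 2) := by
    have h1 : ((N : ℚ)) ^ 2 ≤ (T.card : ℚ) * ((3 * N - 2 : ℕ) : ℚ) := by
      have hc : ((∑ b ∈ T, m b : ℕ) : ℚ) ^ 2 ≤ (T.card : ℚ) * ((∑ b ∈ T, m b ^ 2 : ℕ) : ℚ) := by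
        push_cast
        exact sq_sum_le_card_mul_sum_sq
      rw [hsum] at hc
      refine hc.trans ?_
      have h3 : (∑ b ∈ T, m b ^ 2) ≤ 3 * N - 2 := by
        rw [hfact1]; omega
      exact mul_le_mul_of_nonneg_left ((Nat.cast_le (α := ℚ)).mpr h3) (by positivity)
    exact_mod_cast h1
  rw [hrange]
  have hd : 0 < 3 * N - 2 := by omega
  rw [Nat.div_le_iff_le_mul_add_pred hd]
  have h2n : 2 ^ (2 * n) = N ^ 2 := by rw [hN, two_mul, pow_add, sq]
  calc 2 ^ (2 * n) + (3 * N - 2) - 1 ≤ N ^ 2 + (3 * N - 2 - 1) := by rw [h2n]; omega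
    _ ≤ T.card * (3 * N - 2) + (3 * N - 2 - 1) := by gcongr
    _ = (3 * N - 2) * T.card + (3 * N - 2 - 1) := by rw [mul_comm]
end

section
/- For even n, ⌈2^{2n} / (3·2ⁿ − 2)⌉ = (2ⁿ + 2)/3, and for odd n, ⌈2^{2n} / (3·2ⁿ − 2)⌉ = (2ⁿ + 1)/3. -/
/-- For even positive `n`, `⌈2^(2n)/(3·2ⁿ−2)⌉ = (2ⁿ+2)/3`, and for odd `n`,
`⌈2^(2n)/(3·2ⁿ−2)⌉ = (2ⁿ+1)/3` (exact divisions). -/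
theorem ceil_div_formula (n : ℕ) (hn : 1 ≤ n) :
    (Even n → (2 ^ (2 * n) + (3 * 2 ^ n - 2) - 1) / (3 * 2 ^ n - 2) = (2 ^ n + 2) / 3) ∧
    (Odd n → (2 ^ (2 * n) + (3 * 2 ^ n - 2) - 1) / (3 * 2 ^ n - 2) = (2 ^ n + 1) / 3) := by
  have hsq : 2 ^ (2 * n) = 2 ^ n * 2 ^ n := by rw [two_mul, pow_add]
  have hmod : 2 ^ n % 3 = 2 ^ (n % 2) % 3 := by
    conv_lhs => rw [← Nat.div_add_mod n 2, pow_add, pow_mul]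
    rw [Nat.mul_mod, Nat.pow_mod]
    norm_num
  constructor
  · intro he
    have h1 : 2 ^ n % 3 = 1 := by
      rw [hmod, Nat.even_iff.mp he]; rfl
    obtain ⟨k, hk⟩ : ∃ k, 2 ^ n = 3 * k + 1 := ⟨2 ^ n / 3, by omega⟩
    have hk1 : 1 ≤ k := by
      have : 2 ≤ 2 ^ n := Nat.one_lt_two_pow_iff.mpr (by omega)
      omega
    rw [hsq, hk]
    have hd : 3 * (3 * k + 1) - 2 = 9 * k + 1 := by omega
    rw [hd]
    have hnum : (3 * k + 1) * (3 * k + 1) + (9 * k + 1) - 1 = (9 * k + 1) * (k + 1) + 5 * k := by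
      ring_nf
      omega
    rw [hnum, Nat.mul_add_div (by omega), Nat.div_eq_of_lt (by omega)]
    omega
  · intro ho
    have h1 : 2 ^ n % 3 = 2 := by
      rw [hmod, Nat.odd_iff.mp ho]; rfl
    obtain ⟨k, hk⟩ : ∃ k, 2 ^ n = 3 * k + 2 := ⟨2 ^ n / 3, by omega⟩
    rw [hsq, hk]
    have hd : 3 * (3 * k + 2) - 2 = 9 * k + 4 := by omega
    rw [hd]
    have hnum : (3 * k + 2) * (3 * k + 2) + (9 * k + 4) - 1 = (9 * k + 4) * (k + 1) + 8 * k + 3 := by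
      ring_nf
      omega
    rw [hnum]
    rw [show (9 * k + 4) * (k + 1) + 8 * k + 3 = (9 * k + 4) * (k + 1) + (8 * k + 3) by ring]
    rw [Nat.mul_add_div (by omega), Nat.div_eq_of_lt (by omega)]
    omega
end

section
/- Let F : 𝔽₂ⁿ → 𝔽₂ⁿ be APN and suppose F ∘ A = B ∘ F for invertible linear maps A, B where dim Fix(A) = k, dim Fix(B) = ℓ, and k = 2, ℓ = 0. Then a contradiction arises: no such APN F exists, because F restricted to Fix(A) would be constant equal to 0 on a 2-dimensional affine structure, violating APN-ness. -/
/-- The fixed-point space of a linear automorphism, as a submodule. -/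
def fixSpace {n : ℕ} (A : (Fin n → ZMod 2) ≃ₗ[ZMod 2] (Fin n → ZMod 2)) :
    Submodule (ZMod 2) (Fin n → ZMod 2) where
  carrier := {x | A x = x}
  add_mem' := by intro a b ha hb; simp only [Set.mem_setOf_eq, map_add] at *; rw [ha, hb]
  zero_mem' := by simp
  smul_mem' := by intro c x hx; simp only [Set.mem_setOf_eq, map_smul] at *; rw [hx]

/-- There is no APN function `F` with `F ∘ A = B ∘ F` where
`dim Fix(A) = 2` and `dim Fix(B) = 0`. -/
theorem no_apn_fix_two_zero {n : ℕ}
    (F : (Fin n → ZMod 2) → (Fin n → ZMod 2)) (hF : IsAPN F)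
    (A B : (Fin n → ZMod 2) ≃ₗ[ZMod 2] (Fin n → ZMod 2))
    (h : ∀ x, F (A x) = B (F x))
    (hk : Module.finrank (ZMod 2) (fixSpace A) = 2)
    (hl : Module.finrank (ZMod 2) (fixSpace B) = 0) :
    False := by
  classical
  have hBbot : fixSpace B = ⊥ := Submodule.finrank_eq_zero.mp hl
  have hF0 : ∀ x ∈ fixSpace A, F x = 0 := by
    intro x hx
    have hx' : A x = x := hx
    have : F x ∈ fixSpace B := by
      show B (F x) = F x
      rw [← h x, hx']
    rw [hBbot] at this; simpa using this
  have hcard : Fintype.card (fixSpace A) = 4 := by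
    rw [Module.card_eq_pow_finrank (K := ZMod 2), hk]
    simp [ZMod.card]
  -- pick nonzero a in fixSpace A
  have hne : fixSpace A ≠ ⊥ := by
    intro hbot
    rw [hbot] at hk
    rw [finrank_bot] at hk; omega
  obtain ⟨a, ha, ha0⟩ := Submodule.exists_mem_ne_zero_of_ne_bot hne
  -- the fixSpace as finset
  have hsub : (fixSpace A : Set (Fin n → ZMod 2)).toFinset ⊆
      Finset.univ.filter fun x => F x + F (x + a) = 0 := by
    intro x hx
    rw [Set.mem_toFinset] at hx
    simp only [Finset.mem_filter, Finset.mem_univ, true_and]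
    rw [hF0 x hx, hF0 (x + a) ((fixSpace A).add_mem hx ha), add_zero]
  have h4 : (Finset.univ.filter fun x => F x + F (x + a) = 0).card ≥ 4 := by
    calc 4 = Fintype.card (fixSpace A) := hcard.symm
    _ = (fixSpace A : Set (Fin n → ZMod 2)).toFinset.card := by
        simp [Set.toFinset_card]
    _ ≤ _ := Finset.card_le_card hsub
  have := hF a ha0 0
  omega
end

section
/- Let F : 𝔽₂ⁿ → 𝔽₂ⁿ be APN and let v be a nonzero vector and f : 𝔽₂ⁿ → 𝔽₂ a Boolean function. Define G(x) = F(x) + f(x)·v. Then G is APN if and only if for all x, y, a ∈ 𝔽₂ⁿ with F(x)+F(x+a)+F(y)+F(y+a) = v, we have f(x)+f(x+a)+f(y)+f(y+a) = 0. -/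
private lemma pi_add_self {n : ℕ} (w : Fin n → ZMod 2) : w + w = 0 := by
  funext i
  exact (by decide : ∀ c : ZMod 2, c + c = 0) (w i)

private lemma three_le_card {α : Type*} [DecidableEq α] {S : Finset α} {a b c : α}
    (ha : a ∈ S) (hb : b ∈ S) (hc : c ∈ S)
    (hab : a ≠ b) (hac : a ≠ c) (hbc : b ≠ c) : 3 ≤ S.card := by
  have hsub : ({a, b, c} : Finset α) ⊆ S := by
    intro z hz
    simp only [Finset.mem_insert, Finset.mem_singleton] at hz
    rcases hz with rfl | rfl | rfl <;> assumption
  have hcard : ({a, b, c} : Finset α).card = 3 := by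
    rw [Finset.card_insert_of_notMem (by simp [hab, hac]),
      Finset.card_insert_of_notMem (by simp [hbc]), Finset.card_singleton]
  exact hcard ▸ Finset.card_le_card hsub

private lemma not_apn_of_three {n : ℕ} (H : (Fin n → ZMod 2) → (Fin n → ZMod 2))
    (hH : IsAPN H) {a : Fin n → ZMod 2} (ha : a ≠ 0) {b x₁ x₂ x₃ : Fin n → ZMod 2}
    (h1 : H x₁ + H (x₁ + a) = b) (h2 : H x₂ + H (x₂ + a) = b) (h3 : H x₃ + H (x₃ + a) = b)
    (d12 : x₁ ≠ x₂) (d13 : x₁ ≠ x₃) (d23 : x₂ ≠ x₃) : False := by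
  have hle := hH a ha b
  have h3' : 3 ≤ (Finset.univ.filter fun x => H x + H (x + a) = b).card :=
    three_le_card (Finset.mem_filter.mpr ⟨Finset.mem_univ _, h1⟩)
      (Finset.mem_filter.mpr ⟨Finset.mem_univ _, h2⟩)
      (Finset.mem_filter.mpr ⟨Finset.mem_univ _, h3⟩) d12 d13 d23
  omega

private lemma alg1 {n : ℕ} (A B C D s t u w v : Fin n → ZMod 2)
    (h1 : A + B + C + D = v) (h3 : s + t + u + w = v) :
    (C + u) + (D + w) = (A + s) + (B + t) := by
  linear_combination h1 + h3 - pi_add_self A - pi_add_self B - pi_add_self s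
    - pi_add_self t + pi_add_self v

private lemma alg3 {n : ℕ} (A B C D s t u w b : Fin n → ZMod 2)
    (h1 : (A + s) + (B + t) = b) (h2 : (C + u) + (D + w) = b)
    (hs : s + t = u + w) : A + B = C + D := by
  linear_combination h1 - h2 - hs

private lemma alg4 {n : ℕ} (A B C D s t u w b v : Fin n → ZMod 2)
    (h1 : (A + s) + (B + t) = b) (h2 : (C + u) + (D + w) = b)
    (h3 : s + t + u + w = v) : A + B + C + D = v := by
  linear_combination h1 + h2 + h3 - pi_add_self s - pi_add_self t - pi_add_self u
    - pi_add_self w + pi_add_self b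

private lemma exists_two {α : Type*} [DecidableEq α] {S : Finset α} (h : 2 < S.card)
    (g : α → α) : ∃ x y, x ∈ S ∧ y ∈ S ∧ y ≠ x ∧ y ≠ g x := by
  have h0 : 0 < S.card := by omega
  obtain ⟨x, hx⟩ := Finset.card_pos.mp h0
  have hne : (S \ {x, g x}).Nonempty := by
    rw [Finset.sdiff_nonempty]
    intro hsub
    have h1 := Finset.card_le_card hsub
    have h2 : ({x, g x} : Finset α).card ≤ 2 :=
      (Finset.card_insert_le _ _).trans (by rw [Finset.card_singleton])
    omega
  obtain ⟨y, hy⟩ := hne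
  rw [Finset.mem_sdiff, Finset.mem_insert, Finset.mem_singleton] at hy
  push_neg at hy
  exact ⟨x, y, hx, hy.1, hy.2.1, hy.2.2⟩

/-- switching construction of Edel and Pott: for APN `F`, nonzero `v` and a
Boolean function `f`, the function `G(x) = F(x) + f(x)·v` is APN iff whenever
`F(x)+F(x+a)+F(y)+F(y+a) = v` we have `f(x)+f(x+a)+f(y)+f(y+a) = 0`. -/
theorem switching_apn_iff {n : ℕ}
    (F : (Fin n → ZMod 2) → (Fin n → ZMod 2)) (hF : IsAPN F)
    (v : Fin n → ZMod 2) (hv : v ≠ 0)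
    (f : (Fin n → ZMod 2) → ZMod 2) :
    IsAPN (fun x => F x + f x • v) ↔
      ∀ x y a : Fin n → ZMod 2,
        F x + F (x + a) + F y + F (y + a) = v →
        f x + f (x + a) + f y + f (y + a) = 0 := by
  classical
  have haa : ∀ x a : Fin n → ZMod 2, x + a + a = x := fun x a => by
    rw [add_assoc, pi_add_self, add_zero]
  constructor
  · intro hG x y a hxy
    have ha : a ≠ 0 := by
      rintro rfl
      apply hv
      rw [← hxy]
      simp only [add_zero]
      linear_combination pi_add_self (F x) + pi_add_self (F y)
    by_contra hne
    have hone : f x + f (x + a) + f y + f (y + a) = 1 := by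
      rcases (by decide : ∀ c : ZMod 2, c = 0 ∨ c = 1)
        (f x + f (x + a) + f y + f (y + a)) with h | h
      · exact absurd h hne
      · exact h
    have hyx : y ≠ x := fun h => hv (by
      rw [h] at hxy
      linear_combination pi_add_self (F x) + pi_add_self (F (x + a)) - hxy)
    have hyxa : y ≠ x + a := fun h => hv (by
      rw [h, haa x a] at hxy
      linear_combination pi_add_self (F x) + pi_add_self (F (x + a)) - hxy)
    have hxxa : x ≠ x + a := fun h => ha (left_eq_add.mp h)
    have hsv : f x • v + f (x + a) • v + f y • v + f (y + a) • v = v := by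
      rw [← add_smul, ← add_smul, ← add_smul, hone, one_smul]
    exact not_apn_of_three (fun x => F x + f x • v) hG ha rfl
      (by rw [haa x a]; exact add_comm _ _)
      (alg1 (F x) (F (x + a)) (F y) (F (y + a)) (f x • v) (f (x + a) • v)
        (f y • v) (f (y + a) • v) v hxy hsv)
      hxxa hyx.symm hyxa.symm
  · intro hcond a ha b
    by_contra hcard
    push_neg at hcard
    obtain ⟨x, y, hx, hy, hyx, hyxa⟩ := exists_two hcard (· + a)
    have hyxa' : y ≠ x + a := hyxa
    have hxxa : x ≠ x + a := fun h => ha (left_eq_add.mp h)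
    have hxb : F x + f x • v + (F (x + a) + f (x + a) • v) = b := (Finset.mem_filter.mp hx).2
    have hyb : F y + f y • v + (F (y + a) + f (y + a) • v) = b := (Finset.mem_filter.mp hy).2
    rcases (by decide : ∀ p q : ZMod 2, p = q ∨ p + q = 1)
      (f x + f (x + a)) (f y + f (y + a)) with hpq | hpq
    · have hs : f x • v + f (x + a) • v = f y • v + f (y + a) • v := by
        rw [← add_smul, ← add_smul, hpq]
      have hFeq := alg3 (F x) (F (x + a)) (F y) (F (y + a)) _ _ _ _ b hxb hyb hs
      exact not_apn_of_three F hF ha rfl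
        (by rw [haa x a]; exact add_comm _ _) hFeq.symm hxxa hyx.symm hyxa'.symm
    · have hsv : f x • v + f (x + a) • v + f y • v + f (y + a) • v = v := by
        rw [← add_smul, ← add_smul, ← add_smul, add_assoc (f x + f (x + a)), hpq, one_smul]
      have hFv : F x + F (x + a) + F y + F (y + a) = v :=
        alg4 (F x) (F (x + a)) (F y) (F (y + a)) _ _ _ _ b v hxb hyb hsv
      have h0 := hcond x y a hFv
      rw [← add_assoc] at hpq
      rw [h0] at hpq
      exact absurd hpq (by decide)
end

section
/- Let F : 𝔽₂ⁿ → 𝔽₂ⁿ be a quadratic APN function. Then there exists a unique function Π_F : 𝔽₂ⁿ → 𝔽₂ⁿ with Π_F(0) = 0 such that for all nonzero α, Π_F(α) ≠ 0 and ⟨Π_F(α), F(x)+F(x+α)+F(α)+F(0)⟩ = 0 for all x. -/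
/-- `F` is quadratic: every derivative `x ↦ F(x) + F(x+a)` (`a ≠ 0`) is affine. -/
def IsQuadratic {n : ℕ} (F : (Fin n → ZMod 2) → (Fin n → ZMod 2)) : Prop :=
  ∀ a : Fin n → ZMod 2, a ≠ 0 →
    ∃ (L : (Fin n → ZMod 2) →ₗ[ZMod 2] (Fin n → ZMod 2)) (c : Fin n → ZMod 2),
      ∀ x, F x + F (x + a) = L x + c

open Matrix Module

lemma zmod2_add_self {n : ℕ} (v : Fin n → ZMod 2) : v + v = 0 := by
  funext i
  simp only [Pi.add_apply, Pi.zero_apply]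
  exact CharTwo.add_self_eq_zero _

lemma ortho_unique {n : ℕ} (F : (Fin n → ZMod 2) → (Fin n → ZMod 2))
    (hQ : ∀ a : Fin n → ZMod 2, a ≠ 0 →
      ∃ (L : (Fin n → ZMod 2) →ₗ[ZMod 2] (Fin n → ZMod 2)) (c : Fin n → ZMod 2),
        ∀ x, F x + F (x + a) = L x + c)
    (hF : ∀ a : Fin n → ZMod 2, a ≠ 0 → ∀ b : Fin n → ZMod 2,
      (Finset.univ.filter fun x => F x + F (x + a) = b).card ≤ 2)
    (α : Fin n → ZMod 2) (hα : α ≠ 0) :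
    ∃! v : Fin n → ZMod 2, v ≠ 0 ∧
      ∀ x, (∑ i, v i * (F x + F (x + α) + F α + F 0) i) = 0 := by
  classical
  obtain ⟨L, c, hL⟩ := hQ α hα
  have hc : c = F 0 + F α := by
    have h := hL 0
    rw [zero_add, map_zero, zero_add] at h
    exact h.symm
  have hB : ∀ x, F x + F (x + α) + F α + F 0 = L x := by
    intro x
    have h1 : F x + F (x + α) + F α + F 0 = L x + c + F α + F 0 := by rw [hL x]
    rw [h1, hc]
    have h2 : L x + (F 0 + F α) + F α + F 0 = L x + (F 0 + F 0) + (F α + F α) := by abel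
    rw [h2, zmod2_add_self, zmod2_add_self, add_zero, add_zero]
  have hLα : L α = 0 := by
    have h := (hB α).symm
    rw [zmod2_add_self α] at h
    have h2 : F α + F 0 + F α + F 0 = (F α + F α) + (F 0 + F 0) := by abel
    rw [h2, zmod2_add_self, zmod2_add_self, add_zero] at h
    exact h
  -- kernel is exactly {0, α}
  have hker_sub : ∀ z, L z = 0 → z = 0 ∨ z = α := by
    intro z hz
    by_contra hcon
    push_neg at hcon
    have hmem : ∀ w, L w = 0 → w ∈ Finset.univ.filter (fun x => F x + F (x + α) = c) := by
      intro w hw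
      simp only [Finset.mem_filter, Finset.mem_univ, true_and, hL w, hw, zero_add]
    have hsub : ({0, α, z} : Finset (Fin n → ZMod 2)) ⊆
        Finset.univ.filter (fun x => F x + F (x + α) = c) := by
      intro w hw
      simp only [Finset.mem_insert, Finset.mem_singleton] at hw
      rcases hw with h | h | h
      · rw [h]; exact hmem 0 (map_zero L)
      · rw [h]; exact hmem α hLα
      · rw [h]; exact hmem z hz
    have hcard3 : ({0, α, z} : Finset (Fin n → ZMod 2)).card = 3 :=
      Finset.card_eq_three.mpr ⟨0, α, z, Ne.symm hα, Ne.symm hcon.1, fun h => hcon.2 h.symm, rfl⟩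
    have := Finset.card_le_card hsub
    rw [hcard3] at this
    have := hF α hα c
    omega
  have hker : LinearMap.ker L = Submodule.span (ZMod 2) {α} := by
    apply le_antisymm
    · intro z hz
      rcases hker_sub z (LinearMap.mem_ker.mp hz) with rfl | rfl
      · exact Submodule.zero_mem _
      · exact Submodule.subset_span rfl
    · rw [Submodule.span_le]
      intro z hz
      rw [Set.mem_singleton_iff] at hz
      subst hz
      exact LinearMap.mem_ker.mpr hLα
  have hfk : finrank (ZMod 2) (LinearMap.ker L) = 1 := by
    rw [hker]; exact finrank_span_singleton hα
  have hrn := LinearMap.finrank_range_add_finrank_ker L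
  rw [hfk, Module.finrank_fin_fun] at hrn
  set M : Matrix (Fin n) (Fin n) (ZMod 2) := LinearMap.toMatrix' L with hMdef
  have hM : M.mulVecLin = L := by
    rw [hMdef, ← Matrix.toLin'_apply', Matrix.toLin'_toMatrix']
  have hn : 1 ≤ n := by
    rcases Nat.eq_zero_or_pos n with h | h
    · subst h; exact absurd (funext fun i => i.elim0) hα
    · exact h
  set S : Submodule (ZMod 2) (Fin n → ZMod 2) := LinearMap.ker (Mᵀ.mulVecLin) with hSdef
  have hrnT := LinearMap.finrank_range_add_finrank_ker (Mᵀ.mulVecLin)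
  have hrT : finrank (ZMod 2) (LinearMap.range Mᵀ.mulVecLin) = n - 1 := by
    have h1 : Mᵀ.rank = M.rank := Matrix.rank_transpose M
    unfold Matrix.rank at h1
    rw [hM] at h1
    omega
  rw [hrT, Module.finrank_fin_fun, ← hSdef] at hrnT
  have hfS : finrank (ZMod 2) S = 1 := by omega
  -- membership in S ↔ orthogonality condition
  have hmemS : ∀ v, v ∈ S ↔
      ∀ x, (∑ i, v i * (F x + F (x + α) + F α + F 0) i) = 0 := by
    intro v
    have key : ∀ x, (∑ i, v i * (F x + F (x + α) + F α + F 0) i) = (Mᵀ *ᵥ v) ⬝ᵥ x := by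
      intro x
      have : (∑ i, v i * (F x + F (x + α) + F α + F 0) i) = v ⬝ᵥ (L x) := by
        rw [hB x]; rfl
      rw [this, ← hM, Matrix.mulVecLin_apply, Matrix.dotProduct_mulVec,
        ← Matrix.mulVec_transpose]
    constructor
    · intro hv x
      rw [key x]
      have hv0 : Mᵀ *ᵥ v = 0 := hv
      rw [hv0, zero_dotProduct]
    · intro h
      show Mᵀ.mulVecLin v = 0
      rw [Matrix.mulVecLin_apply]
      funext j
      have := h (Pi.single j 1)
      rw [key] at this
      rwa [dotProduct_single, mul_one] at this
  -- S has a unique nonzero element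
  have hSne : S ≠ ⊥ := by
    intro h
    rw [h, finrank_bot] at hfS
    exact one_ne_zero hfS.symm
  obtain ⟨v, hvS, hv0⟩ := S.ne_bot_iff.mp hSne
  have hSspan : Submodule.span (ZMod 2) {v} = S := by
    apply Submodule.eq_of_le_of_finrank_eq
    · rw [Submodule.span_le]
      intro z hz
      rw [Set.mem_singleton_iff] at hz
      subst hz; exact hvS
    · rw [hfS, finrank_span_singleton hv0]
  refine ⟨v, ⟨hv0, (hmemS v).mp hvS⟩, ?_⟩
  rintro w ⟨hw0, hw⟩
  have hwS : w ∈ S := (hmemS w).mpr hw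
  rw [← hSspan, Submodule.mem_span_singleton] at hwS
  obtain ⟨a, ha⟩ := hwS
  have ha1 : a = 1 := by
    have hall : ∀ b : ZMod 2, b = 0 ∨ b = 1 := by decide
    rcases hall a with h | h
    · exfalso
      rw [h, zero_smul] at ha
      exact hw0 ha.symm
    · exact h
  rw [ha1, one_smul] at ha
  exact ha.symm

/-- existence and uniqueness of the ortho-derivative of a quadratic APN
function: a unique `Π_F` with `Π_F(0)=0`, `Π_F(α) ≠ 0` for `α ≠ 0` and
`⟨Π_F(α), F(x)+F(x+α)+F(α)+F(0)⟩ = 0` for all `x`. -/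
theorem ortho_derivative_exists_unique {n : ℕ}
    (F : (Fin n → ZMod 2) → (Fin n → ZMod 2))
    (hQ : IsQuadratic F) (hF : IsAPN F) :
    ∃! P : (Fin n → ZMod 2) → (Fin n → ZMod 2),
      P 0 = 0 ∧
      ∀ α : Fin n → ZMod 2, α ≠ 0 →
        P α ≠ 0 ∧
        ∀ x, (∑ i, P α i * (F x + F (x + α) + F α + F 0) i) = 0 := by
  classical
  have key := fun (α : Fin n → ZMod 2) (hα : α ≠ 0) => ortho_unique F hQ hF α hα
  refine ⟨fun α => if h : α = 0 then 0 else Classical.choose (key α h).exists, ⟨?_, ?_⟩, ?_⟩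
  · simp
  · intro α hα
    simp only [dif_neg hα]
    exact Classical.choose_spec (key α hα).exists
  · intro Q hQspec
    funext α
    by_cases h : α = 0
    · simp only [h, hQspec.1, dif_pos]
    · simp only [dif_neg h]
      exact (key α h).unique (hQspec.2 α h) (Classical.choose_spec (key α h).exists)
end

section
/- Let F : 𝔽₂ⁿ → 𝔽₂ⁿ be APN with F ∘ A = B ∘ F for invertible linear maps A, B with dim Fix(A) = k and dim Fix(B) = ℓ. If k ≥ 3 and ℓ < k, then F cannot be APN (contradiction): equivalently, if F is APN and k ≥ 3 then ℓ ≥ k. -/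
open Finset

private def chi (c : ZMod 2) : ℤ := if c = 0 then 1 else -1

private lemma chi_add : ∀ a b : ZMod 2, chi (a + b) = chi a * chi b := by decide

private lemma chi_zero : chi 0 = 1 := rfl

private lemma sum_chi_eq_zero {M : Type*} [AddCommGroup M] [Fintype M]
    (f : M → ZMod 2) (hadd : ∀ a b, f (a + b) = f a + f b) (m₀ : M) (h0 : f m₀ ≠ 0) :
    ∑ m : M, chi (f m) = 0 := by
  have h1 : ∑ m : M, chi (f (m + m₀)) = ∑ m : M, chi (f m) :=
    Equiv.sum_comp (Equiv.addRight m₀) (fun m => chi (f m))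
  have h2 : ∀ m : M, chi (f (m + m₀)) = - chi (f m) := by
    intro m
    rw [hadd, chi_add]
    have : chi (f m₀) = -1 := if_neg h0
    rw [this]; ring
  rw [Finset.sum_congr rfl (fun m _ => h2 m), Finset.sum_neg_distrib] at h1
  linarith

private lemma sq_pow_two (s : ℤ) (k : ℕ) (hk : 3 ≤ k) (h : s * s = 2 ^ k) :
    ∃ j, k = 2 * j ∧ 2 ≤ j ∧ (s = 2 ^ j ∨ s = -(2 ^ j)) := by
  have h1 : (↑(s.natAbs * s.natAbs) : ℤ) = 2 ^ k := by rw [Int.natAbs_mul_self]; exact h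
  have h2 : s.natAbs * s.natAbs = 2 ^ k := by exact_mod_cast h1
  have h3 : s.natAbs ∣ 2 ^ k := ⟨s.natAbs, h2.symm⟩
  obtain ⟨i, hik, hi⟩ := (Nat.dvd_prime_pow Nat.prime_two).mp h3
  have h4 : 2 ^ (i + i) = 2 ^ k := by rw [pow_add, ← hi]; exact h2
  have h5 : i + i = k := Nat.pow_right_injective le_rfl h4
  refine ⟨i, by omega, by omega, ?_⟩
  rcases Int.natAbs_eq s with he | he
  · left; rw [he, hi]; push_cast; ring
  · right; rw [he, hi]; push_cast; ring

private lemma apn_core {V W : Type*}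
    [AddCommGroup V] [Module (ZMod 2) V] [Fintype V] [DecidableEq V]
    [AddCommGroup W] [Module (ZMod 2) W] [Fintype W] [DecidableEq W]
    (G : V → W)
    (hG : ∀ a : V, a ≠ 0 → ∀ b : W,
      (Finset.univ.filter fun x => G x + G (x + a) = b).card ≤ 2)
    (k : ℕ) (hk3 : 3 ≤ k) (hcardV : Fintype.card V = 2 ^ k)
    (hcard : Fintype.card W * 2 ≤ Fintype.card V) : False := by
  classical
  haveI : Module.Finite (ZMod 2) W := Module.Finite.of_finite
  let e : W ≃ₗ[ZMod 2] Module.Dual (ZMod 2) W := (Module.finBasis (ZMod 2) W).toDualEquiv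
  haveI : Fintype (Module.Dual (ZMod 2) W) := Fintype.ofEquiv W e.toEquiv
  have hcardDual : Fintype.card (Module.Dual (ZMod 2) W) = Fintype.card W :=
    (Fintype.card_congr e.toEquiv).symm
  have h2W : ∀ w : W, w + w = 0 := by
    intro w
    have : (2 : ZMod 2) • w = w + w := two_smul _ w
    rw [show (2 : ZMod 2) = 0 by decide, zero_smul] at this
    exact this.symm
  haveI : Nontrivial V := Fintype.one_lt_card_iff_nontrivial.mp (by
    rw [hcardV]; exact lt_of_lt_of_le (by norm_num) (Nat.pow_le_pow_right (by norm_num) hk3))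
  obtain ⟨a₁, ha₁⟩ := exists_ne (0 : V)
  have hNsum : ∀ a : V,
      (∑ b : W, (Finset.univ.filter fun x => G x + G (x + a) = b).card) = Fintype.card V := by
    intro a
    rw [← Finset.card_eq_sum_card_fiberwise (fun x _ => Finset.mem_univ _)]
    rfl
  have hWV : Fintype.card W * 2 = Fintype.card V := by
    refine le_antisymm hcard ?_
    calc Fintype.card V = ∑ b : W, (Finset.univ.filter fun x => G x + G (x + a₁) = b).card :=
          (hNsum a₁).symm
      _ ≤ ∑ _b : W, 2 := Finset.sum_le_sum (fun b _ => hG a₁ ha₁ b)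
      _ = Fintype.card W * 2 := by rw [Finset.sum_const, smul_eq_mul, Finset.card_univ]
  have hN2 : ∀ a : V, a ≠ 0 → ∀ b : W,
      (Finset.univ.filter fun x => G x + G (x + a) = b).card = 2 := by
    intro a ha b
    by_contra hb
    have hlt : (Finset.univ.filter fun x => G x + G (x + a) = b).card < 2 :=
      lt_of_le_of_ne (hG a ha b) hb
    have : (∑ b : W, (Finset.univ.filter fun x => G x + G (x + a) = b).card)
        < ∑ _b : W, 2 :=
      Finset.sum_lt_sum (fun c _ => hG a ha c) ⟨b, Finset.mem_univ b, hlt⟩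
    rw [hNsum a, Finset.sum_const, smul_eq_mul, Finset.card_univ, hWV] at this
    exact lt_irrefl _ this
  -- character sums over W vanish for nonzero functionals
  have hsumW : ∀ ψ : Module.Dual (ZMod 2) W, ψ ≠ 0 → ∑ b : W, chi (ψ b) = 0 := by
    intro ψ hψ
    have : ∃ b₀ : W, ψ b₀ ≠ 0 := by
      by_contra hb
      push_neg at hb
      exact hψ (LinearMap.ext fun b => hb b)
    obtain ⟨b₀, hb₀⟩ := this
    exact sum_chi_eq_zero (fun b => ψ b) (fun a b => map_add ψ a b) b₀ hb₀
  -- derivative character sums vanish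
  have hDer : ∀ ψ : Module.Dual (ZMod 2) W, ψ ≠ 0 → ∀ a : V, a ≠ 0 →
      ∑ x : V, chi (ψ (G x + G (x + a))) = 0 := by
    intro ψ hψ a ha
    have h1 : ∑ b : W, ∑ x ∈ Finset.univ.filter (fun x => G x + G (x + a) = b),
        chi (ψ (G x + G (x + a))) = ∑ x : V, chi (ψ (G x + G (x + a))) :=
      Finset.sum_fiberwise_of_maps_to (fun x _ => Finset.mem_univ _) _
    rw [← h1]
    have h2 : ∀ b : W, ∑ x ∈ Finset.univ.filter (fun x => G x + G (x + a) = b),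
        chi (ψ (G x + G (x + a))) = 2 * chi (ψ b) := by
      intro b
      rw [Finset.sum_congr rfl (fun x hx => by rw [(Finset.mem_filter.mp hx).2])]
      rw [Finset.sum_const, hN2 a ha b]
      ring
    rw [Finset.sum_congr rfl (fun b _ => h2 b), ← Finset.mul_sum, hsumW ψ hψ, mul_zero]
  -- Walsh value squared
  set S : Module.Dual (ZMod 2) W → ℤ := fun ψ => ∑ x : V, chi (ψ (G x)) with hS
  have hSsq : ∀ ψ : Module.Dual (ZMod 2) W, ψ ≠ 0 → S ψ * S ψ = (Fintype.card V : ℤ) := by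
    intro ψ hψ
    have h1 : S ψ * S ψ = ∑ x : V, ∑ y : V, chi (ψ (G x)) * chi (ψ (G y)) := by
      rw [hS]; exact Finset.sum_mul_sum _ _ _ _
    have h2 : ∀ x : V, ∑ y : V, chi (ψ (G x)) * chi (ψ (G y))
        = ∑ a : V, chi (ψ (G x + G (x + a))) := by
      intro x
      rw [← Equiv.sum_comp (Equiv.addLeft x) (fun y => chi (ψ (G x)) * chi (ψ (G y)))]
      refine Finset.sum_congr rfl fun a _ => ?_
      simp only [Equiv.coe_addLeft]
      rw [map_add, chi_add]
    rw [h1, Finset.sum_congr rfl (fun x _ => h2 x), Finset.sum_comm]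
    rw [← Finset.add_sum_erase _ _ (Finset.mem_univ (0 : V))]
    have h3 : ∑ x : V, chi (ψ (G x + G (x + 0))) = (Fintype.card V : ℤ) := by
      have hx1 : ∀ x : V, chi (ψ (G x + G (x + 0))) = 1 := by
        intro x; rw [add_zero, h2W (G x), map_zero, chi_zero]
      rw [Finset.sum_congr rfl (fun x _ => hx1 x), Finset.sum_const, Finset.card_univ,
        nsmul_eq_mul, mul_one]
    rw [h3, Finset.sum_eq_zero (fun a ha => hDer ψ hψ a (Finset.mem_erase.mp ha).1), add_zero]
  -- extract j with k = 2j
  have h8 : (8 : ℕ) ≤ 2 ^ k :=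
    le_trans (by norm_num) (Nat.pow_le_pow_right (by norm_num) hk3)
  haveI : Nontrivial (Module.Dual (ZMod 2) W) := Fintype.one_lt_card_iff_nontrivial.mp (by
    rw [hcardDual]
    have := hWV
    rw [hcardV] at this
    omega)
  obtain ⟨ψ₁, hψ₁⟩ := exists_ne (0 : Module.Dual (ZMod 2) W)
  obtain ⟨j, hkj, hj2, _⟩ := sq_pow_two (S ψ₁) k hk3 (by rw [hSsq ψ₁ hψ₁, hcardV]; push_cast; ring)
  have hSval : ∀ ψ : Module.Dual (ZMod 2) W, ψ ≠ 0 → S ψ = 2 ^ j ∨ S ψ = -(2 ^ j) := by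
    intro ψ hψ
    obtain ⟨j', hkj', _, hv⟩ := sq_pow_two (S ψ) k hk3
      (by rw [hSsq ψ hψ, hcardV]; push_cast; ring)
    have : j' = j := by omega
    rwa [this] at hv
  -- main counting identity with b = 0
  set N₀ : ℕ := (Finset.univ.filter fun x : V => G x = 0).card with hN₀
  have hmain : ∑ ψ : Module.Dual (ZMod 2) W, S ψ = (Fintype.card W : ℤ) * N₀ := by
    rw [hS]
    rw [Finset.sum_comm]
    have h1 : ∀ x : V, ∑ ψ : Module.Dual (ZMod 2) W, chi (ψ (G x))
        = if G x = 0 then (Fintype.card W : ℤ) else 0 := by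
      intro x
      by_cases hx : G x = 0
      · rw [if_pos hx]
        have : ∀ ψ : Module.Dual (ZMod 2) W, chi (ψ (G x)) = 1 := by
          intro ψ; rw [hx, map_zero, chi_zero]
        rw [Finset.sum_congr rfl (fun ψ _ => this ψ), Finset.sum_const, Finset.card_univ,
          hcardDual, nsmul_eq_mul, mul_one]
      · rw [if_neg hx]
        have : ∃ ψ₀ : Module.Dual (ZMod 2) W, ψ₀ (G x) ≠ 0 := by
          by_contra hb
          push_neg at hb
          exact hx ((Module.forall_dual_apply_eq_zero_iff (ZMod 2) (G x)).mp hb)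
        obtain ⟨ψ₀, hψ₀⟩ := this
        exact sum_chi_eq_zero (fun ψ => ψ (G x)) (fun a b => rfl) ψ₀ hψ₀
    rw [Finset.sum_congr rfl (fun x _ => h1 x),
      ← Finset.sum_filter (fun x : V => G x = 0) (fun _ => (Fintype.card W : ℤ)),
      Finset.sum_const, nsmul_eq_mul, mul_comm]
  -- split off ψ = 0
  have hsplit : S 0 + ∑ ψ ∈ Finset.univ.erase (0 : Module.Dual (ZMod 2) W), S ψ
      = ∑ ψ : Module.Dual (ZMod 2) W, S ψ :=
    Finset.add_sum_erase _ _ (Finset.mem_univ 0)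
  have hS0 : S 0 = (Fintype.card V : ℤ) := by
    show ∑ x : V, chi ((0 : Module.Dual (ZMod 2) W) (G x)) = (Fintype.card V : ℤ)
    have : ∀ x : V, chi ((0 : Module.Dual (ZMod 2) W) (G x)) = 1 := by
      intro x; rw [LinearMap.zero_apply, chi_zero]
    rw [Finset.sum_congr rfl (fun x _ => this x), Finset.sum_const, Finset.card_univ,
      nsmul_eq_mul, mul_one]
  set U : ℤ := ∑ ψ ∈ Finset.univ.erase (0 : Module.Dual (ZMod 2) W), S ψ with hU
  -- U = cardW * N₀ - cardV, and structure
  have hUeq : U = (Fintype.card W : ℤ) * N₀ - (Fintype.card V : ℤ) := by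
    rw [← hmain, ← hsplit, hS0]; ring
  -- divisibility: 2^(j+1) ∣ U
  have hcardWval : (Fintype.card W : ℤ) = 2 ^ (2 * j - 1) := by
    have : Fintype.card W * 2 = 2 ^ (2 * j) := by rw [hWV, hcardV, hkj]
    have h2 : Fintype.card W = 2 ^ (2 * j - 1) := by
      have hpow : 2 ^ (2 * j) = 2 ^ (2 * j - 1) * 2 := by
        rw [← pow_succ]; congr 1; omega
      omega
    exact_mod_cast congrArg (Nat.cast : ℕ → ℤ) h2
  have hdvdU : (2 : ℤ) ^ (j + 1) ∣ U := by
    rw [hUeq, hcardWval, hcardV, hkj]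
    push_cast
    exact dvd_sub (Dvd.dvd.mul_right (pow_dvd_pow 2 (by omega)) _) (pow_dvd_pow 2 (by omega))
  -- parity: U ≡ (cardW - 1) * 2^j mod 2^(j+1)
  have hmod : ∀ ψ ∈ Finset.univ.erase (0 : Module.Dual (ZMod 2) W),
      S ψ % 2 ^ (j + 1) = 2 ^ j := by
    intro ψ hψ
    have hψne := (Finset.mem_erase.mp hψ).1
    have hlt : (2 : ℤ) ^ j < 2 ^ (j + 1) := by
      rw [pow_succ]; nlinarith [pow_pos (show (0:ℤ) < 2 by norm_num) j]
    have hpos : (0 : ℤ) ≤ 2 ^ j := by positivity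
    rcases hSval ψ hψne with hv | hv
    · rw [hv]; exact Int.emod_eq_of_lt hpos hlt
    · rw [hv]
      have h2p : (2 : ℤ) ^ (j + 1) = 2 ^ j * 2 := pow_succ 2 j
      rw [h2p]
      have h1 : -(2 : ℤ) ^ j = 2 ^ j + (2 ^ j * 2) * (-1) := by ring
      rw [h1, Int.add_mul_emod_self_left]
      exact Int.emod_eq_of_lt hpos (by rw [h2p] at hlt; exact hlt)
  have hUmod : U % 2 ^ (j + 1)
      = (((Fintype.card W : ℤ) - 1) * 2 ^ j) % 2 ^ (j + 1) := by
    rw [hU, Finset.sum_int_mod]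
    rw [Finset.sum_congr rfl hmod, Finset.sum_const, Finset.card_erase_of_mem (Finset.mem_univ _),
      Finset.card_univ, hcardDual, nsmul_eq_mul]
    congr 1
    have h1 : (1:ℕ) ≤ Fintype.card W := Fintype.card_pos
    push_cast [Nat.cast_sub h1]
    ring
  -- contradiction
  have hUmod2 : (((Fintype.card W : ℤ) - 1) * 2 ^ j) % 2 ^ (j + 1) = 0 := by
    rw [← hUmod]
    exact Int.emod_eq_zero_of_dvd hdvdU
  have hdvd2 : (2 : ℤ) ^ (j + 1) ∣ ((Fintype.card W : ℤ) - 1) * 2 ^ j :=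
    Int.dvd_of_emod_eq_zero hUmod2
  rw [hcardWval] at hdvd2
  obtain ⟨d, hdd⟩ := hdvd2
  have hcancel : ((2 : ℤ) ^ (2 * j - 1) - 1) * 2 ^ j = (2 * d) * 2 ^ j := by
    rw [hdd, pow_succ]; ring
  have h9 : (2 : ℤ) ^ (2 * j - 1) - 1 = 2 * d :=
    mul_right_cancel₀ (by positivity) hcancel
  obtain ⟨m, hm⟩ := dvd_pow_self (2 : ℤ) (show 2 * j - 1 ≠ 0 by omega)
  rw [hm] at h9
  omega
/-- if `F` is APN with `F ∘ A = B ∘ F` and `dim Fix(A) = k ≥ 3`,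
then `dim Fix(B) ≥ k`. -/
theorem apn_fix_dim_ge {n : ℕ}
    (F : (Fin n → ZMod 2) → (Fin n → ZMod 2)) (hF : IsAPN F)
    (A B : (Fin n → ZMod 2) ≃ₗ[ZMod 2] (Fin n → ZMod 2))
    (h : ∀ x, F (A x) = B (F x))
    (hk : 3 ≤ Module.finrank (ZMod 2) (fixSpace A)) :
    Module.finrank (ZMod 2) (fixSpace A) ≤ Module.finrank (ZMod 2) (fixSpace B) := by
  classical
  by_contra hlt
  push_neg at hlt
  haveI : Fintype (fixSpace A) := Fintype.ofFinite _
  haveI : Fintype (fixSpace B) := Fintype.ofFinite _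
  haveI : Module.Finite (ZMod 2) (fixSpace A) := Module.Finite.of_finite
  haveI : Module.Finite (ZMod 2) (fixSpace B) := Module.Finite.of_finite
  have hmem : ∀ x : (Fin n → ZMod 2), x ∈ fixSpace A → F x ∈ fixSpace B := by
    intro x hx
    have hx' : A x = x := hx
    show B (F x) = F x
    rw [← h x, hx']
  set G : fixSpace A → fixSpace B := fun x => ⟨F x, hmem x x.2⟩ with hGdef
  have hcardA : Fintype.card (fixSpace A) = 2 ^ Module.finrank (ZMod 2) (fixSpace A) := by
    have := Module.card_eq_pow_finrank (K := ZMod 2) (V := fixSpace A)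
    simpa using this
  have hcardB : Fintype.card (fixSpace B) = 2 ^ Module.finrank (ZMod 2) (fixSpace B) := by
    have := Module.card_eq_pow_finrank (K := ZMod 2) (V := fixSpace B)
    simpa using this
  refine apn_core G ?_ (Module.finrank (ZMod 2) (fixSpace A)) hk hcardA ?_
  · intro a ha b
    have hcoe : (a : Fin n → ZMod 2) ≠ 0 := by
      simpa [Submodule.coe_eq_zero] using ha
    refine le_trans (Finset.card_le_card_of_injOn (fun x => (x : Fin n → ZMod 2)) ?_ ?_)
      (hF (a : Fin n → ZMod 2) hcoe (b : Fin n → ZMod 2))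
    · intro x hx
      rw [Finset.mem_coe, Finset.mem_filter] at hx ⊢
      refine ⟨Finset.mem_univ _, ?_⟩
      have hx2 := hx.2
      have := congrArg (Subtype.val) hx2
      simpa [hGdef] using this
    · exact Subtype.val_injective.injOn
  · rw [hcardA, hcardB]
    calc 2 ^ Module.finrank (ZMod 2) (fixSpace B) * 2
        = 2 ^ (Module.finrank (ZMod 2) (fixSpace B) + 1) := by rw [pow_succ]
      _ ≤ 2 ^ Module.finrank (ZMod 2) (fixSpace A) :=
          Nat.pow_le_pow_right (by norm_num) (by omega)
end
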